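/- arXiv:2401.05962 — 3 statements merged into one kernel-verified Lean document; each statement's English description precedes it below -/
import Mathlib

section
/- Let Δ be a simplicial complex and σ ∈ Δ a face such that H̃_j(link_Δ σ) ≠ 0 for some j ≥ 0. Then there exists a chain of faces σ = τ_j ⊊ τ_{j−1} ⊊ … ⊊ τ_0 ⊊ τ_{−1} in Δ such that for each −1 ≤ i ≤ j, H̃_i(link_Δ τ_i) ≠ 0. -/
open Finset
open scoped Classical

/-- An abstract simplicial complex: a collection of finite subsets of the
vertex type `V` closed under taking subsets. -/
def IsComplex {V : Type} (K : Set (Finset V)) : Prop :=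
  ∀ s ∈ K, ∀ t ⊆ s, t ∈ K

/-- The link of a face `σ` in `K`: all faces `τ` disjoint from `σ` with `σ ∪ τ ∈ K`. -/
def link {V : Type} [DecidableEq V] (K : Set (Finset V)) (σ : Finset V) : Set (Finset V) :=
  {τ | Disjoint σ τ ∧ σ ∪ τ ∈ K}

theorem link_isComplex {V : Type} [DecidableEq V] {K : Set (Finset V)} (hK : IsComplex K)
    (σ : Finset V) : IsComplex (link K σ) := by
  intro s hs t ht
  exact ⟨hs.1.mono_right ht, hK _ hs.2 _ (Finset.union_subset_union_right ht)⟩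

/-- The incidence sign of a vertex `x` with respect to a face `σ`, relative to a fixed
(arbitrary) well-ordering of the vertices. -/
noncomputable def bdrySign {V : Type} (σ : Finset V) (x : V) : ℤ :=
  (-1 : ℤ) ^ (σ.filter (fun y => WellOrderingRel y x)).card

/-- The total (reduced) simplicial chain module of `K` with coefficients in `𝕜`:
functions from the faces of `K` (including the empty face) to `𝕜`. -/
abbrev TotalChains (𝕜 : Type) [Field 𝕜] {V : Type} (K : Set (Finset V)) : Type :=
  {s : Finset V // s ∈ K} → 𝕜

/-- The simplicial boundary operator on the total chain module, written in terms of
cofaces: `(∂c)(τ) = Σ_{x ∉ τ, τ ∪ {x} ∈ K} ± c(τ ∪ {x})`. -/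
noncomputable def bdryMap (𝕜 : Type) [Field 𝕜] {V : Type} [DecidableEq V] [Fintype V]
    (K : Set (Finset V)) : TotalChains 𝕜 K →ₗ[𝕜] TotalChains 𝕜 K where
  toFun c := fun τ => ∑ x ∈ τ.1ᶜ,
    if h : insert x τ.1 ∈ K then bdrySign τ.1 x • c ⟨insert x τ.1, h⟩ else 0
  map_add' c d := by
    funext τ
    rw [Pi.add_apply, ← Finset.sum_add_distrib]
    refine Finset.sum_congr rfl fun x _ => ?_
    split
    · rw [Pi.add_apply, smul_add]
    · rw [add_zero]
  map_smul' a c := by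
    funext τ
    rw [RingHom.id_apply, Pi.smul_apply, Finset.smul_sum]
    refine Finset.sum_congr rfl fun x _ => ?_
    split
    · rw [Pi.smul_apply, smul_comm]
    · rw [smul_zero]

/-- The submodule of chains supported on faces of cardinality `i + 1`
(the chains of homological degree `i`). -/
def degChains (𝕜 : Type) [Field 𝕜] {V : Type} (K : Set (Finset V)) (i : ℤ) :
    Submodule 𝕜 (TotalChains 𝕜 K) where
  carrier := {c | ∀ τ : {s : Finset V // s ∈ K}, (τ.1.card : ℤ) ≠ i + 1 → c τ = 0}
  add_mem' := by
    intro a b ha hb τ hτ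
    rw [Pi.add_apply, ha τ hτ, hb τ hτ, add_zero]
  zero_mem' := fun τ _ => rfl
  smul_mem' := by
    intro a c hc τ hτ
    rw [Pi.smul_apply, hc τ hτ, smul_zero]

/-- The `i`-th reduced simplicial homology of the complex `K` over the field `𝕜`:
degree-`i` cycles modulo boundaries of degree-`(i+1)` chains. -/
noncomputable abbrev redHomology (𝕜 : Type) [Field 𝕜] {V : Type} [DecidableEq V] [Fintype V]
    (K : Set (Finset V)) (i : ℤ) : Type :=
  ↥(degChains 𝕜 K i ⊓ LinearMap.ker (bdryMap 𝕜 K)) ⧸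
    Submodule.comap (degChains 𝕜 K i ⊓ LinearMap.ker (bdryMap 𝕜 K)).subtype
      (Submodule.map (bdryMap 𝕜 K) (degChains 𝕜 K (i + 1)))

section Aux
variable {V : Type} [DecidableEq V]

omit [DecidableEq V] in
lemma sign_sq (σ : Finset V) (x : V) : bdrySign σ x * bdrySign σ x = 1 := by
  unfold bdrySign
  rw [← pow_add]
  exact Even.neg_one_pow ⟨_, rfl⟩

lemma sign_insert {σ : Finset V} {x : V} (hx : x ∉ σ) (y : V) :
    bdrySign (insert x σ) y = (if WellOrderingRel x y then -1 else 1) * bdrySign σ y := by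
  unfold bdrySign
  rw [filter_insert]
  split
  · rw [card_insert_of_notMem (fun h => hx (mem_filter.1 h).1), pow_succ]
    ring
  · rw [one_mul]

lemma sign_pair {τ : Finset V} {x y : V} (hxy : x ≠ y) (hx : x ∉ τ) (hy : y ∉ τ) :
    bdrySign τ x * bdrySign (insert x τ) y + bdrySign τ y * bdrySign (insert y τ) x = 0 := by
  rw [sign_insert hx, sign_insert hy]
  rcases trichotomous_of WellOrderingRel x y with h | h | h
  · have h2 : ¬ WellOrderingRel y x := asymm h
    simp only [if_pos h, if_neg h2]
    ring
  · exact absurd h hxy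
  · have h2 : ¬ WellOrderingRel x y := asymm h
    simp only [if_neg h2, if_pos h]
    ring

end Aux

namespace DHC

variable {𝕜 : Type} [Field 𝕜] {V : Type} [DecidableEq V] [Fintype V]

/-- zero-extension of a chain to all finsets -/
noncomputable def Z {K : Set (Finset V)} (c : TotalChains 𝕜 K) : Finset V → 𝕜 :=
  fun s => if h : s ∈ K then c ⟨s, h⟩ else 0

lemma Z_inj {K : Set (Finset V)} {c d : TotalChains 𝕜 K} (h : Z c = Z d) : c = d := by
  funext s
  have := congrFun h s.1
  simpa [Z, s.2] using this

/-- the boundary operator on all functions -/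
noncomputable def D : (Finset V → 𝕜) → (Finset V → 𝕜) :=
  fun f τ => ∑ x ∈ τᶜ, bdrySign τ x • f (insert x τ)

lemma Z_bdry {K : Set (Finset V)} (hK : IsComplex K) (c : TotalChains 𝕜 K) :
    Z (bdryMap 𝕜 K c) = D (Z c) := by
  funext τ
  by_cases hτ : τ ∈ K
  · simp only [Z, dif_pos hτ, bdryMap, LinearMap.coe_mk, AddHom.coe_mk, D]
    refine Finset.sum_congr rfl fun x _ => ?_
    by_cases h : insert x τ ∈ K
    · rw [dif_pos h, dif_pos h]
    · rw [dif_neg h, dif_neg h, smul_zero]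
  · rw [Z, dif_neg hτ, D]
    refine (Finset.sum_eq_zero fun x _ => ?_).symm
    have : insert x τ ∉ K := fun h => hτ (hK _ h _ (Finset.subset_insert _ _))
    rw [Z, dif_neg this, smul_zero]

lemma D_D (f : Finset V → 𝕜) : D (D f) = 0 := by
  funext τ
  show ∑ x ∈ τᶜ, bdrySign τ x • ∑ y ∈ (insert x τ)ᶜ, bdrySign (insert x τ) y • f (insert y (insert x τ)) = 0
  have key : ∀ x ∈ τᶜ, bdrySign τ x • ∑ y ∈ (insert x τ)ᶜ, bdrySign (insert x τ) y • f (insert y (insert x τ))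
      = ∑ y ∈ τᶜ, if x ≠ y then (bdrySign τ x * bdrySign (insert x τ) y) • f (insert y (insert x τ)) else 0 := by
    intro x hx
    rw [Finset.smul_sum, compl_insert, ← Finset.filter_ne, Finset.sum_filter]
    refine Finset.sum_congr rfl fun y _ => ?_
    split
    · rw [smul_smul]
    · rfl
  rw [Finset.sum_congr rfl key, ← Finset.sum_product']
  rw [← Finset.sum_filter]
  refine Finset.sum_involution (fun p _ => (p.2, p.1)) ?_ ?_ ?_ ?_
  · rintro ⟨x, y⟩ hp
    simp only [Finset.mem_filter, Finset.mem_product] at hp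
    obtain ⟨⟨hx, hy⟩, hne⟩ := hp
    simp only
    rw [Finset.mem_compl] at hx hy
    rw [Finset.insert_comm, ← add_smul, sign_pair hne hx hy, zero_smul]
  · rintro ⟨x, y⟩ hp h
    simp only [Finset.mem_filter, Finset.mem_product] at hp
    intro hc
    exact hp.2 (congrArg Prod.fst hc).symm
  · rintro ⟨x, y⟩ hp
    simp only [Finset.mem_filter, Finset.mem_product] at hp ⊢
    exact ⟨⟨hp.1.2, hp.1.1⟩, Ne.symm hp.2⟩
  · rintro ⟨x, y⟩ _
    rfl

lemma bdry_bdry {K : Set (Finset V)} (hK : IsComplex K) (c : TotalChains 𝕜 K) :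
    bdryMap 𝕜 K (bdryMap 𝕜 K c) = 0 := by
  apply Z_inj
  rw [Z_bdry hK, Z_bdry hK, D_D]
  funext s
  simp [Z]

lemma bdry_deg {K : Set (Finset V)} {i : ℤ} {c : TotalChains 𝕜 K}
    (hc : c ∈ degChains 𝕜 K (i + 1)) : bdryMap 𝕜 K c ∈ degChains 𝕜 K i := by
  intro τ hτ
  show (∑ x ∈ τ.1ᶜ, _) = 0
  refine Finset.sum_eq_zero fun x hx => ?_
  split
  · rw [hc _ ?_, smul_zero]
    rw [Finset.card_insert_of_notMem (Finset.mem_compl.1 hx)]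
    push_cast
    intro h
    exact hτ (by linarith)
  · rfl

end DHC
namespace DHC
variable {𝕜 : Type} [Field 𝕜] {V : Type} [DecidableEq V] [Fintype V]

/-! ### Subcomplex extension and restriction -/

noncomputable def ext {N : Set (Finset V)} (K : Set (Finset V)) (c : TotalChains 𝕜 N) :
    TotalChains 𝕜 K :=
  fun s => if h : s.1 ∈ N then c ⟨s.1, h⟩ else 0

noncomputable def res {K : Set (Finset V)} (N : Set (Finset V)) (hNK : N ⊆ K)
    (c : TotalChains 𝕜 K) : TotalChains 𝕜 N :=
  fun s => c ⟨s.1, hNK s.2⟩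

omit [Fintype V] in
lemma Z_ext {N K : Set (Finset V)} (hNK : N ⊆ K) (c : TotalChains 𝕜 N) :
    Z (ext K c) = Z c := by
  funext s
  by_cases hs : s ∈ K
  · by_cases hn : s ∈ N
    · simp [Z, ext, hs, hn]
    · simp [Z, ext, hs, hn]
  · have hn : s ∉ N := fun h => hs (hNK h)
    simp [Z, ext, hs, hn]

lemma ext_bdry {N K : Set (Finset V)} (hN : IsComplex N) (hK : IsComplex K) (hNK : N ⊆ K)
    (c : TotalChains 𝕜 N) : bdryMap 𝕜 K (ext K c) = ext K (bdryMap 𝕜 N c) := by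
  apply Z_inj
  rw [Z_ext hNK, Z_bdry hK, Z_bdry hN, Z_ext hNK]

omit [Fintype V] in
lemma ext_apply {N K : Set (Finset V)} (c : TotalChains 𝕜 N) {s : Finset V} (hs : s ∈ N)
    (hsK : s ∈ K) : ext K c ⟨s, hsK⟩ = c ⟨s, hs⟩ := by
  simp [ext, hs]

omit [Fintype V] in
lemma ext_inj {N K : Set (Finset V)} (hNK : N ⊆ K) {c d : TotalChains 𝕜 N}
    (h : ext K c = ext K d) : c = d := by
  funext s
  have := congrFun h ⟨s.1, hNK s.2⟩
  rwa [ext_apply c s.2, ext_apply d s.2] at this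

omit [Fintype V] in
lemma ext_deg {N K : Set (Finset V)} {i : ℤ} {c : TotalChains 𝕜 N}
    (h : c ∈ degChains 𝕜 N i) : ext K c ∈ degChains 𝕜 K i := by
  intro s hs
  unfold ext
  split
  · exact h _ hs
  · rfl

omit [Fintype V] in
lemma res_deg {N K : Set (Finset V)} (hNK : N ⊆ K) {i : ℤ} {c : TotalChains 𝕜 K}
    (h : c ∈ degChains 𝕜 K i) : res N hNK c ∈ degChains 𝕜 N i :=
  fun s hs => h _ hs

/-! ### Deletion -/

def del (K : Set (Finset V)) (v : V) : Set (Finset V) := {s | s ∈ K ∧ v ∉ s}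

omit [DecidableEq V] [Fintype V] in
lemma del_subset {K : Set (Finset V)} {v : V} : del K v ⊆ K := fun _ h => h.1

omit [DecidableEq V] [Fintype V] in
lemma del_isComplex {K : Set (Finset V)} (hK : IsComplex K) (v : V) : IsComplex (del K v) :=
  fun s hs t ht => ⟨hK _ hs.1 _ ht, fun hv => hs.2 (ht hv)⟩

omit [Fintype V] in
lemma link_del {K : Set (Finset V)} {v : V} {ρ : Finset V} (hv : v ∉ ρ) :
    link (del K v) ρ = del (link K ρ) v := by
  ext τ
  constructor
  · rintro ⟨h1, h2, h3⟩
    exact ⟨⟨h1, h2⟩, fun hvτ => h3 (Finset.mem_union_right _ hvτ)⟩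
  · rintro ⟨⟨h1, h2⟩, h3⟩
    refine ⟨h1, h2, fun hvu => ?_⟩
    rcases Finset.mem_union.1 hvu with h | h
    · exact hv h
    · exact h3 h

omit [Fintype V] in
lemma link_link {K : Set (Finset V)} {σ ρ : Finset V} (h : Disjoint σ ρ) :
    link (link K σ) ρ = link K (σ ∪ ρ) := by
  ext τ
  constructor
  · rintro ⟨h1, h2, h3⟩
    refine ⟨Finset.disjoint_union_left.2 ⟨h2.mono_right Finset.subset_union_right, h1⟩, ?_⟩
    rwa [Finset.union_assoc]
  · rintro ⟨h1, h2⟩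
    rw [Finset.disjoint_union_left] at h1
    refine ⟨h1.2, Finset.disjoint_union_right.2 ⟨h, h1.1⟩, ?_⟩
    rwa [← Finset.union_assoc]

/-! ### The contraction map phi and its section psi -/

omit [Fintype V] in
lemma insert_mem_of_mem_link {K : Set (Finset V)} {v : V} {ρ : Finset V}
    (h : ρ ∈ link K {v}) : insert v ρ ∈ K := by
  rw [Finset.insert_eq]; exact h.2

omit [Fintype V] in
lemma not_mem_of_mem_link {K : Set (Finset V)} {v : V} {ρ : Finset V}
    (h : ρ ∈ link K {v}) : v ∉ ρ := Finset.disjoint_singleton_left.1 h.1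

omit [Fintype V] in
lemma erase_mem_link {K : Set (Finset V)} {v : V} {s : Finset V} (hs : s ∈ K) (hv : v ∈ s) :
    s.erase v ∈ link K {v} := by
  refine ⟨Finset.disjoint_singleton_left.2 (Finset.notMem_erase v s), ?_⟩
  rw [← Finset.insert_eq, Finset.insert_erase hv]
  exact hs

noncomputable def phi (K : Set (Finset V)) (v : V) (c : TotalChains 𝕜 K) :
    TotalChains 𝕜 (link K {v}) :=
  fun ρ => bdrySign ρ.1 v • c ⟨insert v ρ.1, insert_mem_of_mem_link ρ.2⟩

noncomputable def psi (K : Set (Finset V)) (v : V) (w : TotalChains 𝕜 (link K {v})) :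
    TotalChains 𝕜 K :=
  fun s => if h : v ∈ s.1 then bdrySign (s.1.erase v) v • w ⟨s.1.erase v, erase_mem_link s.2 h⟩
    else 0

noncomputable def Phi (v : V) (f : Finset V → 𝕜) : Finset V → 𝕜 :=
  fun ρ => if v ∈ ρ then 0 else bdrySign ρ v • f (insert v ρ)

omit [Fintype V] in
lemma Z_phi {K : Set (Finset V)} (v : V) (c : TotalChains 𝕜 K) :
    Z (phi K v c) = Phi v (Z c) := by
  funext ρ
  by_cases hρ : ρ ∈ link K {v}
  · have hv := not_mem_of_mem_link hρ
    simp only [Z, dif_pos hρ, phi, Phi, if_neg hv, dif_pos (insert_mem_of_mem_link hρ)]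
  · rw [Z, dif_neg hρ, Phi]
    by_cases hv : v ∈ ρ
    · rw [if_pos hv]
    · rw [if_neg hv, Z]
      have : insert v ρ ∉ K := by
        intro h
        exact hρ ⟨Finset.disjoint_singleton_left.2 hv, by rwa [← Finset.insert_eq]⟩
      rw [dif_neg this, smul_zero]

lemma D_Phi (v : V) (f : Finset V → 𝕜) : D (Phi v f) = - Phi v (D f) := by
  funext ρ
  by_cases hv : v ∈ ρ
  · show (∑ x ∈ ρᶜ, _) = _
    rw [Pi.neg_apply, Phi, if_pos hv, neg_zero]
    refine Finset.sum_eq_zero fun x hx => ?_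
    rw [Phi, if_pos (Finset.mem_insert_of_mem hv), smul_zero]
  · show (∑ x ∈ ρᶜ, bdrySign ρ x • Phi v f (insert x ρ)) = _
    rw [Pi.neg_apply, Phi, if_neg hv]
    have hvc : v ∈ ρᶜ := Finset.mem_compl.2 hv
    rw [← Finset.add_sum_erase _ _ hvc]
    rw [show Phi v f (insert v ρ) = 0 from if_pos (Finset.mem_insert_self v ρ), smul_zero,
      zero_add]
    rw [show D f (insert v ρ) = ∑ x ∈ ρᶜ.erase v, bdrySign (insert v ρ) x • f (insert x (insert v ρ)) by
      rw [D, Finset.compl_insert]]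
    rw [Finset.smul_sum, ← Finset.sum_neg_distrib]
    refine Finset.sum_congr rfl fun x hx => ?_
    have hxv : x ≠ v := Finset.ne_of_mem_erase hx
    have hxρ : x ∉ ρ := Finset.mem_compl.1 (Finset.mem_of_mem_erase hx)
    rw [Phi, if_neg (by simp [Finset.mem_insert, hxv.symm, hv] : v ∉ insert x ρ)]
    rw [smul_smul, smul_smul, Finset.insert_comm]
    rw [show bdrySign ρ x * bdrySign (insert x ρ) v = -(bdrySign ρ v * bdrySign (insert v ρ) x) from
      eq_neg_of_add_eq_zero_left (sign_pair hxv hxρ hv), neg_smul]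

lemma Z_neg {K : Set (Finset V)} (c : TotalChains 𝕜 K) : Z (-c) = - Z c := by
  funext s
  by_cases hs : s ∈ K <;> simp [Z, hs]

lemma phi_bdry {K : Set (Finset V)} (hK : IsComplex K) (v : V) (c : TotalChains 𝕜 K) :
    bdryMap 𝕜 (link K {v}) (phi K v c) = - phi K v (bdryMap 𝕜 K c) := by
  apply Z_inj
  rw [Z_bdry (link_isComplex hK {v}), Z_phi, Z_neg, Z_phi, D_Phi, Z_bdry hK]

omit [Fintype V] in
lemma phi_add {K : Set (Finset V)} (v : V) (a b : TotalChains 𝕜 K) :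
    phi K v (a + b) = phi K v a + phi K v b := by
  funext ρ
  simp [phi, smul_add]

omit [Fintype V] in
lemma phi_psi {K : Set (Finset V)} (v : V) (w : TotalChains 𝕜 (link K {v})) :
    phi K v (psi K v w) = w := by
  funext ρ
  have hv := not_mem_of_mem_link ρ.2
  rw [phi, psi, dif_pos (Finset.mem_insert_self v ρ.1)]
  have he : (insert v ρ.1).erase v = ρ.1 := Finset.erase_insert hv
  rw [smul_smul]
  have : w ⟨(insert v ρ.1).erase v, erase_mem_link (insert_mem_of_mem_link ρ.2) (Finset.mem_insert_self v ρ.1)⟩ = w ρ := by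
    congr 1
    exact Subtype.ext he
  rw [this, he, sign_sq, one_smul]

omit [Fintype V] in
lemma phi_deg {K : Set (Finset V)} (v : V) {i : ℤ} {c : TotalChains 𝕜 K}
    (h : c ∈ degChains 𝕜 K i) : phi K v c ∈ degChains 𝕜 (link K {v}) (i - 1) := by
  intro ρ hρ
  rw [phi, h _ ?_, smul_zero]
  rw [Finset.card_insert_of_notMem (not_mem_of_mem_link ρ.2)]
  push_cast
  intro hc
  exact hρ (by linarith)

omit [Fintype V] in
lemma psi_deg {K : Set (Finset V)} (v : V) {i : ℤ} {w : TotalChains 𝕜 (link K {v})}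
    (h : w ∈ degChains 𝕜 (link K {v}) i) : psi K v w ∈ degChains 𝕜 K (i + 1) := by
  intro s hs
  rw [psi]
  split
  · rename_i hv
    rw [h _ ?_, smul_zero]
    rw [Finset.card_erase_of_mem hv]
    have h1 : 1 ≤ s.1.card := Finset.card_pos.2 ⟨v, hv⟩
    push_cast [h1]
    intro hc
    exact hs (by linarith)
  · rfl

omit [Fintype V] in
lemma phi_ext {K : Set (Finset V)} (v : V) (c : TotalChains 𝕜 (del K v)) :
    phi K v (ext K c) = 0 := by
  funext ρ
  have : insert v ρ.1 ∉ del K v := fun h => h.2 (Finset.mem_insert_self v ρ.1)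
  rw [phi, ext, dif_neg this, smul_zero]
  rfl

omit [Fintype V] in
lemma eq_ext_res_of_phi_eq_zero {K : Set (Finset V)} {v : V} {c : TotalChains 𝕜 K}
    (h : phi K v c = 0) : c = ext K (res (del K v) del_subset c) := by
  funext s
  by_cases hv : v ∈ s.1
  · have hρ := erase_mem_link s.2 hv
    have h0 := congrFun h ⟨s.1.erase v, hρ⟩
    rw [phi] at h0
    simp only [Pi.zero_apply] at h0
    have hs : (⟨insert v (s.1.erase v), insert_mem_of_mem_link hρ⟩ : {t : Finset V // t ∈ K}) = s :=
      Subtype.ext (Finset.insert_erase hv)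
    rw [hs] at h0
    have : c s = (bdrySign (s.1.erase v) v * bdrySign (s.1.erase v) v) • c s := by
      rw [sign_sq, one_smul]
    rw [this, ← smul_smul, h0, smul_zero]
    have : s.1 ∉ del K v := fun hd => hd.2 hv
    rw [ext, dif_neg this]
  · have : s.1 ∈ del K v := ⟨s.2, hv⟩
    rw [ext, dif_pos this]
    rfl

/-! ### Homology extraction -/

lemma nontrivial_iff {K : Set (Finset V)} {i : ℤ} :
    Nontrivial (redHomology 𝕜 K i) ↔
      ∃ z : TotalChains 𝕜 K, z ∈ degChains 𝕜 K i ∧ bdryMap 𝕜 K z = 0 ∧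
        z ∉ Submodule.map (bdryMap 𝕜 K) (degChains 𝕜 K (i + 1)) := by
  rw [← not_subsingleton_iff_nontrivial, Submodule.Quotient.subsingleton_iff,
    Submodule.eq_top_iff']
  simp only [Submodule.mem_comap, Submodule.coe_subtype]
  constructor
  · intro h
    push_neg at h
    obtain ⟨⟨z, hz⟩, hmem⟩ := h
    rw [Submodule.mem_inf] at hz
    exact ⟨z, hz.1, LinearMap.mem_ker.1 hz.2, hmem⟩
  · rintro ⟨z, h1, h2, h3⟩
    push_neg
    exact ⟨⟨z, Submodule.mem_inf.2 ⟨h1, LinearMap.mem_ker.2 h2⟩⟩, h3⟩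

lemma empty_mem_of_nontrivial {K : Set (Finset V)} {i : ℤ} (hK : IsComplex K)
    (h : Nontrivial (redHomology 𝕜 K i)) : ∅ ∈ K := by
  obtain ⟨z, _, _, hz⟩ := nontrivial_iff.1 h
  have hz0 : z ≠ 0 := by
    rintro rfl
    exact hz (Submodule.zero_mem _)
  obtain ⟨s, hs⟩ : ∃ s, z s ≠ 0 := by
    by_contra hc
    push_neg at hc
    exact hz0 (funext fun s => hc s)
  exact hK _ s.2 ∅ (Finset.empty_subset _)

lemma mem_of_link_nontrivial {K : Set (Finset V)} {σ : Finset V} {i : ℤ} (hK : IsComplex K)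
    (h : Nontrivial (redHomology 𝕜 (link K σ) i)) : σ ∈ K := by
  have h2 := empty_mem_of_nontrivial (link_isComplex hK σ) h
  have := h2.2
  rwa [Finset.union_empty] at this

end DHC
namespace DHC
variable {𝕜 : Type} [Field 𝕜] {V : Type} [DecidableEq V] [Fintype V]

omit [Fintype V] in
lemma phi_zero {K : Set (Finset V)} (v : V) : phi K v (0 : TotalChains 𝕜 K) = 0 := by
  funext ρ; simp [phi]

omit [Fintype V] in
lemma ext_zero {N K : Set (Finset V)} : ext K (0 : TotalChains 𝕜 N) = 0 := by
  funext s; simp only [ext]; split <;> rfl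

lemma phi_bdry' {K : Set (Finset V)} (hK : IsComplex K) (v : V) (c : TotalChains 𝕜 K) :
    phi K v (bdryMap 𝕜 K c) = - bdryMap 𝕜 (link K {v}) (phi K v c) := by
  have := phi_bdry hK v c
  rw [this, neg_neg]

lemma step : ∀ (n : ℕ) (L : Set (Finset V)), L.ncard ≤ n → IsComplex L →
    ∀ i : ℤ, 0 ≤ i → Nontrivial (redHomology 𝕜 L i) →
    ∃ ρ : Finset V, ρ.Nonempty ∧ ρ ∈ L ∧
      Nontrivial (redHomology 𝕜 (link L ρ) (i - 1)) := by
  intro n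
  induction n with
  | zero =>
    intro L hcard hL i hi h
    exfalso
    have hLe : L = ∅ := (Set.ncard_eq_zero (Set.toFinite L)).1 (Nat.le_zero.1 hcard)
    obtain ⟨z, _, _, hznb⟩ := nontrivial_iff.1 h
    have hz0 : z ≠ 0 := by rintro rfl; exact hznb (Submodule.zero_mem _)
    obtain ⟨s, _⟩ : ∃ s, z s ≠ 0 := by
      by_contra hc; push_neg at hc; exact hz0 (funext fun s => hc s)
    exact Set.eq_empty_iff_forall_notMem.1 hLe s.1 s.2
  | succ n IH =>
    intro L hcard hL i hi h
    obtain ⟨z, hzdeg, hzcyc, hznb⟩ := nontrivial_iff.1 h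
    have hz0 : z ≠ 0 := by rintro rfl; exact hznb (Submodule.zero_mem _)
    obtain ⟨s, hs⟩ : ∃ s, z s ≠ 0 := by
      by_contra hc; push_neg at hc; exact hz0 (funext fun s => hc s)
    have hcards : (s.1.card : ℤ) = i + 1 := by
      by_contra hc; exact hs (hzdeg s hc)
    obtain ⟨v, hv⟩ : s.1.Nonempty := by
      rw [← Finset.card_pos]
      by_contra hc
      push_neg at hc
      rw [Nat.le_zero.1 hc] at hcards
      omega
    have hvL : {v} ∈ L := hL _ s.2 _ (Finset.singleton_subset_iff.2 hv)
    set w := phi L v z with hw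
    have hwdeg : w ∈ degChains 𝕜 (link L {v}) (i - 1) := phi_deg v hzdeg
    have hwcyc : bdryMap 𝕜 (link L {v}) w = 0 := by
      rw [hw, phi_bdry hL, hzcyc, phi_zero, neg_zero]
    by_cases hb : w ∈ Submodule.map (bdryMap 𝕜 (link L {v}))
        (degChains 𝕜 (link L {v}) ((i - 1) + 1))
    case neg =>
      exact ⟨{v}, Finset.singleton_nonempty v, hvL, nontrivial_iff.2 ⟨w, hwdeg, hwcyc, hb⟩⟩
    case pos =>
      obtain ⟨u, hudeg, huw⟩ := hb
      have hudeg' : u ∈ degChains 𝕜 (link L {v}) i := by rwa [sub_add_cancel] at hudeg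
      set c1 := bdryMap 𝕜 L (psi L v u) with hc1
      have hc1mem : c1 ∈ Submodule.map (bdryMap 𝕜 L) (degChains 𝕜 L (i + 1)) :=
        ⟨psi L v u, psi_deg v hudeg', rfl⟩
      set z' := z + c1 with hz'
      have hphiz' : phi L v z' = 0 := by
        have h1 : phi L v c1 = -w := by
          rw [hc1, phi_bdry' hL, phi_psi, huw]
        rw [hz', phi_add, h1, ← hw, add_neg_cancel]
      have hz'cyc : bdryMap 𝕜 L z' = 0 := by
        rw [hz', map_add, hzcyc, hc1, bdry_bdry hL, add_zero]
      have hz'deg : z' ∈ degChains 𝕜 L i :=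
        Submodule.add_mem _ hzdeg (bdry_deg (psi_deg v hudeg'))
      have hz'nb : z' ∉ Submodule.map (bdryMap 𝕜 L) (degChains 𝕜 L (i + 1)) := by
        intro hmem
        apply hznb
        have : z = z' - c1 := by rw [hz', add_sub_cancel_right]
        rw [this]
        exact Submodule.sub_mem _ hmem hc1mem
      have hNc : IsComplex (del L v) := del_isComplex hL v
      have hz'ext : z' = ext L (res (del L v) del_subset z') := eq_ext_res_of_phi_eq_zero hphiz'
      set y := res (del L v) del_subset z' with hy
      have hycyc : bdryMap 𝕜 (del L v) y = 0 := by
        apply ext_inj (K := L) del_subset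
        rw [← ext_bdry hNc hL del_subset, ← hz'ext, hz'cyc, ext_zero]
      have hydeg : y ∈ degChains 𝕜 (del L v) i := res_deg del_subset hz'deg
      have hynb : y ∉ Submodule.map (bdryMap 𝕜 (del L v)) (degChains 𝕜 (del L v) (i + 1)) := by
        rintro ⟨u2, hu2deg, hu2⟩
        apply hz'nb
        exact ⟨ext L u2, ext_deg hu2deg, by rw [ext_bdry hNc hL del_subset, hu2, ← hz'ext]⟩
      have hssub : del L v ⊂ L := by
        refine ⟨del_subset, fun hsub => ?_⟩
        exact (hsub hvL).2 (Finset.mem_singleton_self v)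
      have hcardN : (del L v).ncard ≤ n := by
        have := Set.ncard_lt_ncard hssub (Set.toFinite L)
        omega
      obtain ⟨ρ, hρne, hρN, hρh⟩ := IH (del L v) hcardN hNc i hi
        (nontrivial_iff.2 ⟨y, hydeg, hycyc, hynb⟩)
      have hvρ : v ∉ ρ := hρN.2
      rw [link_del hvρ] at hρh
      set M := link L ρ with hM
      have hMc : IsComplex M := link_isComplex hL ρ
      have hMNc : IsComplex (del M v) := del_isComplex hMc v
      obtain ⟨y2, hy2deg, hy2cyc, hy2nb⟩ := nontrivial_iff.1 hρh
      have hey2cyc : bdryMap 𝕜 M (ext M y2) = 0 := by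
        rw [ext_bdry hMNc hMc del_subset, hy2cyc, ext_zero]
      have hey2deg : ext M y2 ∈ degChains 𝕜 M (i - 1) := ext_deg hy2deg
      by_cases hb2 : ext M y2 ∈ Submodule.map (bdryMap 𝕜 M) (degChains 𝕜 M ((i - 1) + 1))
      case neg =>
        exact ⟨ρ, hρne, hρN.1, nontrivial_iff.2 ⟨ext M y2, hey2deg, hey2cyc, hb2⟩⟩
      case pos =>
        obtain ⟨u2, hu2deg, hu2⟩ := hb2
        have hu2deg' : u2 ∈ degChains 𝕜 M i := by rwa [sub_add_cancel] at hu2deg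
        set w2 := phi M v u2 with hw2
        have hw2deg : w2 ∈ degChains 𝕜 (link M {v}) (i - 1) := phi_deg v hu2deg'
        have hw2cyc : bdryMap 𝕜 (link M {v}) w2 = 0 := by
          rw [hw2, phi_bdry hMc, hu2, phi_ext, neg_zero]
        by_cases hb3 : w2 ∈ Submodule.map (bdryMap 𝕜 (link M {v}))
            (degChains 𝕜 (link M {v}) ((i - 1) + 1))
        case neg =>
          have hd : Disjoint ρ {v} := Finset.disjoint_singleton_right.2 hvρ
          have heq : link (link L ρ) {v} = link L (ρ ∪ {v}) := link_link hd
          have hnt : Nontrivial (redHomology 𝕜 (link L (ρ ∪ {v})) (i - 1)) := by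
            rw [← heq]
            exact nontrivial_iff.2 ⟨w2, hw2deg, hw2cyc, hb3⟩
          exact ⟨ρ ∪ {v}, hρne.mono Finset.subset_union_left,
            mem_of_link_nontrivial hL hnt, hnt⟩
        case pos =>
          exfalso
          obtain ⟨x, hxdeg, hx⟩ := hb3
          have hxdeg' : x ∈ degChains 𝕜 (link M {v}) i := by rwa [sub_add_cancel] at hxdeg
          set c2 := bdryMap 𝕜 M (psi M v x) with hc2
          set u3 := u2 + c2 with hu3
          have hphiu3 : phi M v u3 = 0 := by
            have h1 : phi M v c2 = -w2 := by
              rw [hc2, phi_bdry' hMc, phi_psi, hx]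
            rw [hu3, phi_add, h1, ← hw2, add_neg_cancel]
          have hu3ext : u3 = ext M (res (del M v) del_subset u3) :=
            eq_ext_res_of_phi_eq_zero hphiu3
          set y3 := res (del M v) del_subset u3 with hy3
          have hdu3 : bdryMap 𝕜 M u3 = ext M y2 := by
            rw [hu3, map_add, hu2, hc2, bdry_bdry hMc, add_zero]
          have hy3deg : y3 ∈ degChains 𝕜 (del M v) i :=
            res_deg del_subset (Submodule.add_mem _ hu2deg' (bdry_deg (psi_deg v hxdeg')))
          have hy3b : bdryMap 𝕜 (del M v) y3 = y2 := by
            apply ext_inj (K := M) del_subset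
            rw [← ext_bdry hMNc hMc del_subset, ← hu3ext, hdu3]
          have hy3deg2 : y3 ∈ degChains 𝕜 (del M v) ((i - 1) + 1) := by
            rwa [sub_add_cancel]
          exact hy2nb ⟨y3, hy3deg2, hy3b⟩

end DHC
namespace DHC
variable {𝕜 : Type} [Field 𝕜] {V : Type} [DecidableEq V] [Fintype V]

noncomputable def chainF (𝕜 : Type) [Field 𝕜] {V : Type} [DecidableEq V] [Fintype V]
    (K : Set (Finset V)) (j : ℤ) (σ : Finset V) : ℕ → Finset V
  | 0 => σ
  | n + 1 =>
    let t := chainF 𝕜 K j σ n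
    if h : ∃ ρ : Finset V, ρ.Nonempty ∧ Disjoint t ρ ∧
        Nontrivial (redHomology 𝕜 (link K (t ∪ ρ)) (j - (n : ℤ) - 1)) then
      t ∪ h.choose
    else t

lemma chain_inv {K : Set (Finset V)} (hK : IsComplex K) {σ : Finset V} (hσ : σ ∈ K)
    {j : ℤ} (h0 : Nontrivial (redHomology 𝕜 (link K σ) j)) :
    ∀ n : ℕ, (n : ℤ) ≤ j + 1 →
      chainF 𝕜 K j σ n ∈ K ∧
      Nontrivial (redHomology 𝕜 (link K (chainF 𝕜 K j σ n)) (j - n)) ∧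
      (∀ m : ℕ, m < n → chainF 𝕜 K j σ m ⊂ chainF 𝕜 K j σ (m + 1)) := by
  intro n
  induction n with
  | zero =>
    intro _
    refine ⟨hσ, by simpa [chainF] using h0, fun m hm => absurd hm (Nat.not_lt_zero m)⟩
  | succ n IH =>
    intro hn1
    obtain ⟨hmem, hnt, hstrict⟩ := IH (by omega)
    set t := chainF 𝕜 K j σ n with ht
    have hi0 : (0 : ℤ) ≤ j - n := by omega
    obtain ⟨ρ, hρne, hρL, hρnt⟩ := step ((link K t).ncard) (link K t) le_rfl
      (link_isComplex hK t) (j - n) hi0 hnt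
    have hρnt' : Nontrivial (redHomology 𝕜 (link K (t ∪ ρ)) (j - (n : ℤ) - 1)) := by
      have heq : link (link K t) ρ = link K (t ∪ ρ) := link_link hρL.1
      have hd : j - (n : ℤ) - 1 = j - n - 1 := rfl
      rw [← heq]
      convert hρnt using 2
    have hex : ∃ ρ : Finset V, ρ.Nonempty ∧ Disjoint t ρ ∧
        Nontrivial (redHomology 𝕜 (link K (t ∪ ρ)) (j - (n : ℤ) - 1)) :=
      ⟨ρ, hρne, hρL.1, hρnt'⟩
    have hstep : chainF 𝕜 K j σ (n + 1) = t ∪ hex.choose := by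
      rw [chainF, dif_pos hex]
    obtain ⟨hcne, hcdisj, hcnt⟩ := hex.choose_spec
    have hdeg : j - ((n : ℤ) + 1) = j - (n : ℤ) - 1 := by ring
    have hnt1 : Nontrivial (redHomology 𝕜 (link K (chainF 𝕜 K j σ (n + 1))) (j - (n + 1 : ℕ))) := by
      rw [hstep]
      push_cast
      rw [hdeg]
      exact hcnt
    have hssub : t ⊂ t ∪ hex.choose := by
      obtain ⟨x, hx⟩ := hcne
      refine Finset.ssubset_iff_of_subset Finset.subset_union_left |>.2
        ⟨x, Finset.mem_union_right _ hx, Finset.disjoint_right.1 hcdisj hx⟩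
    refine ⟨?_, hnt1, ?_⟩
    · exact mem_of_link_nontrivial hK hnt1
    · intro m hm
      rcases Nat.lt_succ_iff_lt_or_eq.1 hm with hlt | rfl
      · exact hstrict m hlt
      · rw [hstep]
        exact hssub

end DHC

/-- **Descending homology chains.** If the link of `σ` in `Δ` has nontrivial reduced
homology in degree `j ≥ 0`, then there is a chain of faces
`σ = τ_j ⊊ τ_{j-1} ⊊ ⋯ ⊊ τ_0 ⊊ τ_{-1}` in `Δ` such that for each `-1 ≤ i ≤ j` the link
of `τ_i` has nontrivial reduced homology in degree `i`. -/
theorem descending_homology_chain (𝕜 : Type) [Field 𝕜] {V : Type} [DecidableEq V]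
    [Fintype V] (K : Set (Finset V)) (hK : IsComplex K) (σ : Finset V) (hσ : σ ∈ K)
    (j : ℤ) (hj : 0 ≤ j) (h : Nontrivial (redHomology 𝕜 (link K σ) j)) :
    ∃ τ : ℤ → Finset V, τ j = σ ∧
      (∀ i : ℤ, -1 ≤ i → i ≤ j →
        τ i ∈ K ∧ Nontrivial (redHomology 𝕜 (link K (τ i)) i)) ∧
      (∀ i : ℤ, 0 ≤ i → i ≤ j → τ i ⊂ τ (i - 1)) := by
  refine ⟨fun i => DHC.chainF 𝕜 K j σ (j - i).toNat, ?_, ?_, ?_⟩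
  · simp [DHC.chainF]
  · intro i hi1 hij
    have hn : ((j - i).toNat : ℤ) = j - i := Int.toNat_of_nonneg (by omega)
    obtain ⟨hmem, hnt, -⟩ := DHC.chain_inv hK hσ h (j - i).toNat (by omega)
    refine ⟨hmem, ?_⟩
    have : j - ((j - i).toNat : ℤ) = i := by omega
    rwa [this] at hnt
  · intro i hi0 hij
    have hn : ((j - i).toNat : ℤ) = j - i := Int.toNat_of_nonneg (by omega)
    have hsucc : (j - (i - 1)).toNat = (j - i).toNat + 1 := by omega
    obtain ⟨-, -, hstrict⟩ := DHC.chain_inv hK hσ h ((j - i).toNat + 1) (by omega)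
    show DHC.chainF 𝕜 K j σ (j - i).toNat ⊂ DHC.chainF 𝕜 K j σ (j - (i - 1)).toNat
    rw [hsucc]
    exact hstrict (j - i).toNat (Nat.lt_succ_self _)
end

section
/- Let Δ be a simplicial complex and σ ∈ Δ a face that is not an intersection of facets of Δ. Then link_Δ σ is acyclic (all reduced homology groups vanish). -/
open Finset
open scoped Classical

/-- A facet of a simplicial complex: a face that is maximal with respect to inclusion. -/
def IsFacet {V : Type} (K : Set (Finset V)) (F : Finset V) : Prop :=
  F ∈ K ∧ ∀ G ∈ K, F ⊆ G → F = G


section Aux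

variable {V : Type} [DecidableEq V]

lemma bdrySign_mul_self (s : Finset V) (x : V) : bdrySign s x * bdrySign s x = 1 := by
  unfold bdrySign
  rw [← pow_add, ← two_mul, pow_mul, neg_one_sq, one_pow]

lemma bdrySign_insert (s : Finset V) {x y : V} (hx : x ∉ s) (hxy : x ≠ y) :
    bdrySign (insert x s) y =
      (if WellOrderingRel x y then (-1 : ℤ) else 1) * bdrySign s y := by
  unfold bdrySign
  rw [filter_insert]
  split
  · rw [card_insert_of_notMem (fun h => hx (mem_filter.1 h).1), pow_succ]
    ring
  · rw [one_mul]

lemma bdrySign_cancel (ρ : Finset V) {x v : V} (hx : x ∉ ρ) (hv : v ∉ ρ) (hxv : x ≠ v) :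
    bdrySign (insert v ρ) x * bdrySign (insert x ρ) v =
      -(bdrySign ρ v * bdrySign ρ x) := by
  rw [bdrySign_insert ρ hv (Ne.symm hxv), bdrySign_insert ρ hx hxv]
  rcases trichotomous_of WellOrderingRel x v with h | h | h
  · have h2 : ¬ WellOrderingRel v x := asymm h
    simp only [h, h2, if_true, if_false]
    ring
  · exact absurd h hxv
  · have h2 : ¬ WellOrderingRel x v := asymm h
    simp only [h, h2, if_true, if_false]
    ring

lemma exists_facet [Fintype V] {K : Set (Finset V)} {s : Finset V} (hs : s ∈ K) :
    ∃ F, IsFacet K F ∧ s ⊆ F := by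
  obtain ⟨F, hF, hmax⟩ := Finset.exists_max_image
    (univ.filter fun G => G ∈ K ∧ s ⊆ G) card ⟨s, by simp [hs]⟩
  simp only [mem_filter, mem_univ, true_and] at hF
  refine ⟨F, ⟨hF.1, fun G hG hFG => ?_⟩, hF.2⟩
  refine Finset.eq_of_subset_of_card_le hFG (hmax G ?_)
  simp [hG, hF.2.trans hFG]

/-- The cone contraction operator: `(h c)(τ) = ± c(τ \ {v})` when `v ∈ τ`, else `0`. -/
noncomputable def coneMap (𝕜 : Type) [Field 𝕜] {L : Set (Finset V)} (hL : IsComplex L)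
    (v : V) (c : TotalChains 𝕜 L) : TotalChains 𝕜 L :=
  fun τ => if h : v ∈ τ.1 then
    bdrySign (τ.1.erase v) v • c ⟨τ.1.erase v, hL _ τ.2 _ (erase_subset _ _)⟩ else 0

lemma cone_homotopy (𝕜 : Type) [Field 𝕜] [Fintype V] {L : Set (Finset V)}
    (hL : IsComplex L) (v : V) (hv : ∀ τ ∈ L, insert v τ ∈ L) (c : TotalChains 𝕜 L) :
    bdryMap 𝕜 L (coneMap 𝕜 hL v c) + coneMap 𝕜 hL v (bdryMap 𝕜 L c) = c := by
  funext τ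
  rw [Pi.add_apply]
  by_cases hvτ : v ∈ τ.1
  · -- v ∈ τ
    set ρ := τ.1.erase v with hρdef
    have hρL : ρ ∈ L := hL _ τ.2 _ (erase_subset _ _)
    have hvρ : v ∉ ρ := notMem_erase _ _
    have hins : insert v ρ = τ.1 := insert_erase hvτ
    -- second term
    have h2 : coneMap 𝕜 hL v (bdryMap 𝕜 L c) τ =
        bdrySign ρ v • ∑ x ∈ ρᶜ,
          if h : insert x ρ ∈ L then bdrySign ρ x • c ⟨insert x ρ, h⟩ else 0 := by
      rw [coneMap, dif_pos hvτ]
      rfl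
    have hcompl : ρᶜ = insert v τ.1ᶜ := by rw [hρdef, compl_erase]
    have hvnc : v ∉ τ.1ᶜ := by simpa using hvτ
    rw [h2, hcompl, Finset.sum_insert hvnc, smul_add]
    have hterm : (if h : insert v ρ ∈ L then bdrySign ρ v • c ⟨insert v ρ, h⟩ else 0)
        = bdrySign ρ v • c τ := by
      have hmem : insert v ρ ∈ L := hins ▸ τ.2
      rw [dif_pos hmem]
      congr 1
      exact congrArg c (Subtype.ext hins)
    rw [hterm, smul_smul, bdrySign_mul_self, one_smul]
    -- remains: first term + sign • (rest sum) = 0, i.e. sum cancels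
    have hfirst : bdryMap 𝕜 L (coneMap 𝕜 hL v c) τ
        + bdrySign ρ v • ∑ x ∈ τ.1ᶜ,
          (if h : insert x ρ ∈ L then bdrySign ρ x • c ⟨insert x ρ, h⟩ else 0) = 0 := by
      rw [Finset.smul_sum]
      show (∑ x ∈ τ.1ᶜ, _) + _ = 0
      rw [← Finset.sum_add_distrib]
      refine Finset.sum_eq_zero fun x hx => ?_
      have hxτ : x ∉ τ.1 := mem_compl.1 hx
      have hxv : x ≠ v := fun h => hxτ (h ▸ hvτ)
      have hxρ : x ∉ ρ := fun h => hxτ (erase_subset _ _ h)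
      have herase : (insert x τ.1).erase v = insert x ρ :=
        erase_insert_of_ne hxv
      have hiff : (insert x τ.1 ∈ L) ↔ (insert x ρ ∈ L) := by
        constructor
        · intro h; exact hL _ h _ (herase ▸ erase_subset _ _)
        · intro h
          have := hv _ h
          rwa [Finset.insert_comm, hins] at this
      by_cases hxL : insert x ρ ∈ L
      · rw [dif_pos (hiff.2 hxL), dif_pos hxL]
        have hvx : v ∈ insert x τ.1 := mem_insert_of_mem hvτ
        rw [coneMap]
        rw [dif_pos hvx]
        have : c ⟨(insert x τ.1).erase v, hL _ (hiff.2 hxL) _ (erase_subset _ _)⟩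
            = c ⟨insert x ρ, hxL⟩ := congrArg c (Subtype.ext herase)
        rw [this]
        rw [smul_smul, smul_smul, ← add_smul]
        have hsign : bdrySign τ.1 x * bdrySign ((insert x τ.1).erase v) v
            + bdrySign ρ v * bdrySign ρ x = 0 := by
          rw [herase, ← hins, bdrySign_cancel ρ hxρ hvρ hxv]
          ring
        rw [hsign, zero_smul]
      · rw [dif_neg (fun h => hxL (hiff.1 h)), dif_neg hxL, smul_zero, zero_add]
    linear_combination hfirst
  · -- v ∉ τ
    have h2 : coneMap 𝕜 hL v (bdryMap 𝕜 L c) τ = 0 := dif_neg hvτ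
    rw [h2, add_zero]
    show (∑ x ∈ τ.1ᶜ, _) = c τ
    rw [Finset.sum_eq_single v]
    · have hmem : insert v τ.1 ∈ L := hv _ τ.2
      rw [dif_pos hmem]
      have hvi : v ∈ insert v τ.1 := mem_insert_self _ _
      rw [coneMap, dif_pos hvi]
      have herase : (insert v τ.1).erase v = τ.1 := erase_insert hvτ
      have : c ⟨(insert v τ.1).erase v, hL _ hmem _ (erase_subset _ _)⟩ = c τ :=
        congrArg c (Subtype.ext herase)
      rw [this, smul_smul]
      have : bdrySign τ.1 v * bdrySign ((insert v τ.1).erase v) v = 1 := by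
        rw [herase]; exact bdrySign_mul_self _ _
      rw [this, one_smul]
    · intro x hx hxv
      split
      · rename_i hxL
        have : coneMap 𝕜 hL v c ⟨insert x τ.1, hxL⟩ = 0 := by
          rw [coneMap, dif_neg]
          simp only [mem_insert]
          rintro (h | h)
          · exact hxv h.symm
          · exact hvτ h
        rw [this, smul_zero]
      · rfl
    · intro h
      exact absurd (mem_compl.2 hvτ) h

end Aux

/-- **Links of faces that are not intersections of facets are acyclic.** If a face
`σ ∈ Δ` is not an intersection of facets of `Δ`, then all reduced homology groups of
`link_Δ σ` vanish. -/
theorem link_acyclic_of_not_inter_facets (𝕜 : Type) [Field 𝕜] {V : Type} [DecidableEq V]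
    [Fintype V] (K : Set (Finset V)) (hK : IsComplex K) (σ : Finset V) (hσ : σ ∈ K)
    (hnot : ¬ ∃ S : Finset (Finset V), S.Nonempty ∧ (∀ F ∈ S, IsFacet K F) ∧
      σ = S.inf id) :
    ∀ i : ℤ, Subsingleton (redHomology 𝕜 (link K σ) i) := by
  -- Step 1: find a vertex v outside σ lying in every facet containing σ
  classical
  have hfacets : ∃ v, v ∉ σ ∧ ∀ F, IsFacet K F → σ ⊆ F → v ∈ F := by
    set S : Finset (Finset V) := univ.filter (fun F => IsFacet K F ∧ σ ⊆ F) with hS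
    have hSne : S.Nonempty := by
      obtain ⟨F, hF, hσF⟩ := exists_facet hσ
      exact ⟨F, by simp [hS, hF, hσF]⟩
    have hsub : σ ≤ S.inf id := by
      refine Finset.le_inf fun F hF => ?_
      simp only [hS, mem_filter, mem_univ, true_and] at hF
      exact hF.2
    have hne : σ ≠ S.inf id := by
      intro h
      exact hnot ⟨S, hSne, fun F hF => by
        simp only [hS, mem_filter, mem_univ, true_and] at hF
        exact hF.1, h⟩
    obtain ⟨v, hv1, hv2⟩ := Finset.exists_of_ssubset (hsub.ssubset_of_ne hne)
    refine ⟨v, hv2, fun F hF hσF => ?_⟩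
    have : S.inf id ≤ id F := Finset.inf_le (by simp [hS, hF, hσF])
    exact this hv1
  obtain ⟨v, hvσ, hvF⟩ := hfacets
  have hLc : IsComplex (link K σ) := link_isComplex hK σ
  have hP : ∀ τ ∈ link K σ, insert v τ ∈ link K σ := by
    intro τ hτ
    obtain ⟨hd, hu⟩ := hτ
    obtain ⟨F, hF, huf⟩ := exists_facet hu
    have hσF : σ ⊆ F := (Finset.subset_union_left).trans huf
    have hvFmem : v ∈ F := hvF F hF hσF
    constructor
    · exact Finset.disjoint_insert_right.2 ⟨hvσ, hd⟩
    · have hsub : σ ∪ insert v τ ⊆ F := by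
        rw [Finset.union_insert]
        exact Finset.insert_subset hvFmem huf
      exact hK F hF.1 _ hsub
  intro i
  rw [Submodule.Quotient.subsingleton_iff, Submodule.eq_top_iff']
  rintro ⟨z, hz⟩
  obtain ⟨hzdeg, hzker⟩ := Submodule.mem_inf.1 hz
  rw [Submodule.mem_comap, Submodule.mem_map]
  refine ⟨coneMap 𝕜 hLc v z, ?_, ?_⟩
  · -- degree
    intro τ hcard
    rw [coneMap]
    split
    · rename_i hvτ
      have h1 : 1 ≤ τ.1.card := Finset.card_pos.2 ⟨v, hvτ⟩
      have : ((τ.1.erase v).card : ℤ) ≠ i + 1 := by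
        rw [Finset.card_erase_of_mem hvτ]
        push_cast [h1]
        omega
      rw [hzdeg _ this, smul_zero]
    · rfl
  · -- boundary
    have hhom := cone_homotopy 𝕜 hLc v hP z
    have hk : bdryMap 𝕜 (link K σ) z = 0 := hzker
    rw [hk] at hhom
    have hc0 : coneMap 𝕜 hLc v (0 : TotalChains 𝕜 (link K σ)) = 0 := by
      funext τ
      rw [coneMap]
      split
      · rw [Pi.zero_apply, smul_zero]; rfl
      · rfl
    rw [hc0, add_zero] at hhom
    exact hhom
end

section
/- Let Δ be a simplicial complex and σ a face of Δ. Then link_Δ σ is a disjoint union of at least two simplices (full simplices on pairwise disjoint vertex sets) if and only if σ is a maximal intersection in Δ, i.e., σ is an intersection of at least two facets of Δ and is maximal with this property under inclusion. -/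
open Finset
open scoped Classical

/-- `σ` is an intersection of more than one facet of `K`. -/
def IsFacetIntersection {V : Type} [DecidableEq V] [Fintype V] (K : Set (Finset V))
    (σ : Finset V) : Prop :=
  ∃ S : Finset (Finset V), 2 ≤ S.card ∧ (∀ F ∈ S, IsFacet K F) ∧ σ = S.inf id

/-- `σ` is a maximal intersection of `K`: an intersection of more than one facet which
is maximal with this property with respect to inclusion. -/
def IsMaxIntersection {V : Type} [DecidableEq V] [Fintype V] (K : Set (Finset V))
    (σ : Finset V) : Prop :=
  IsFacetIntersection K σ ∧ ∀ τ : Finset V, IsFacetIntersection K τ → σ ⊆ τ → σ = τ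

/-- Every face is contained in a facet (finite vertex set). -/
lemma exists_facet_superset {V : Type} [Fintype V] {K : Set (Finset V)} {s : Finset V}
    (hs : s ∈ K) : ∃ F, IsFacet K F ∧ s ⊆ F := by
  obtain ⟨F, hF, hmax⟩ := Set.Finite.exists_maximalFor id {G | G ∈ K ∧ s ⊆ G}
    (Set.toFinite _) ⟨s, hs, subset_rfl⟩
  exact ⟨F, ⟨hF.1, fun G hG hFG => Finset.Subset.antisymm hFG (hmax ⟨hG, hF.2.trans hFG⟩ hFG)⟩, hF.2⟩

lemma inf_pair_eq {V : Type} [DecidableEq V] [Fintype V] (a b : Finset V) :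
    ({a, b} : Finset (Finset V)).inf id = a ∩ b := by simp

/-- **Characterisation of maximal intersections.** The link of a face `σ` is a disjoint
union of at least two full simplices if and only if `σ` is a maximal intersection. -/
theorem link_disjoint_simplices_iff_maxIntersection {V : Type} [DecidableEq V]
    [Fintype V] (K : Set (Finset V)) (hK : IsComplex K) (σ : Finset V) (hσ : σ ∈ K) :
    (∃ 𝒜 : Finset (Finset V), 2 ≤ 𝒜.card ∧ (∀ F ∈ 𝒜, F.Nonempty) ∧
      (∀ F ∈ 𝒜, ∀ G ∈ 𝒜, F ≠ G → Disjoint F G) ∧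
      link K σ = {t | ∃ F ∈ 𝒜, t ⊆ F}) ↔
    IsMaxIntersection K σ := by
  constructor
  · rintro ⟨𝒜, h2, hne, hdisj, hlink⟩
    -- every element of 𝒜 is in the link, and σ ∪ F is a facet
    have hmem : ∀ F ∈ 𝒜, Disjoint σ F ∧ σ ∪ F ∈ K := by
      intro F hF
      have : F ∈ link K σ := by rw [hlink]; exact ⟨F, hF, subset_rfl⟩
      exact this
    have hfacet : ∀ F ∈ 𝒜, IsFacet K (σ ∪ F) := by
      intro F hF
      refine ⟨(hmem F hF).2, fun G hG hFG => ?_⟩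
      have hσG : σ ⊆ G := (Finset.union_subset_iff.mp hFG).1
      have hGl : G \ σ ∈ link K σ := by
        refine ⟨Finset.disjoint_sdiff, ?_⟩
        rwa [Finset.union_sdiff_of_subset hσG]
      rw [hlink] at hGl
      obtain ⟨F', hF', hsub⟩ := hGl
      have hFF' : F ⊆ F' := by
        refine (Finset.subset_sdiff.mpr ⟨(Finset.union_subset_iff.mp hFG).2,
          ((hmem F hF).1).symm⟩).trans hsub
      have hFeq : F = F' := by
        by_contra hne'
        have hFF : Disjoint F F := (hdisj F hF F' hF' hne').mono_right hFF'
        exact (hne F hF).ne_empty ((Finset.disjoint_self_iff_empty F).mp hFF)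
      subst hFeq
      apply Finset.Subset.antisymm hFG
      intro x hx
      by_cases hxσ : x ∈ σ
      · exact Finset.mem_union_left _ hxσ
      · exact Finset.mem_union_right _ (hsub (Finset.mem_sdiff.mpr ⟨hx, hxσ⟩))
    -- every facet containing σ arises from 𝒜
    have hfrom : ∀ G, IsFacet K G → σ ⊆ G → ∃ F ∈ 𝒜, G = σ ∪ F := by
      intro G hG hσG
      have hGl : G \ σ ∈ link K σ := by
        refine ⟨Finset.disjoint_sdiff, ?_⟩
        rw [Finset.union_sdiff_of_subset hσG]
        exact hG.1
      rw [hlink] at hGl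
      obtain ⟨F, hF, hsub⟩ := hGl
      refine ⟨F, hF, hG.2 _ (hfacet F hF).1 ?_⟩
      intro x hx
      by_cases hxσ : x ∈ σ
      · exact Finset.mem_union_left _ hxσ
      · exact Finset.mem_union_right _ (hsub (Finset.mem_sdiff.mpr ⟨hx, hxσ⟩))
    obtain ⟨A, hA, B, hB, hAB⟩ := Finset.one_lt_card.mp h2
    have hABne : σ ∪ A ≠ σ ∪ B := by
      intro h
      apply hAB
      have := congrArg (· \ σ) h
      simpa [Finset.union_sdiff_cancel_left (hmem A hA).1,
        Finset.union_sdiff_cancel_left (hmem B hB).1] using this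
    have hinter : IsFacetIntersection K σ := by
      refine ⟨{σ ∪ A, σ ∪ B}, ?_, ?_, ?_⟩
      · rw [Finset.card_insert_of_notMem (by simpa using hABne), Finset.card_singleton]
      · intro F hF
        rcases Finset.mem_insert.mp hF with h | h
        · exact h ▸ hfacet A hA
        · exact (Finset.mem_singleton.mp h) ▸ hfacet B hB
      · rw [inf_pair_eq, ← Finset.union_inter_distrib_left,
          Finset.disjoint_iff_inter_eq_empty.mp (hdisj A hA B hB hAB), Finset.union_empty]
    refine ⟨hinter, fun τ hτ hστ => ?_⟩
    obtain ⟨S, hSc, hSfac, hτeq⟩ := hτ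
    obtain ⟨P, hP, Q, hQ, hPQ⟩ := Finset.one_lt_card.mp hSc
    have hτP : τ ⊆ P := hτeq ▸ Finset.le_iff_subset.mp (Finset.inf_le hP)
    have hτQ : τ ⊆ Q := hτeq ▸ Finset.le_iff_subset.mp (Finset.inf_le hQ)
    obtain ⟨F, hF, hPeq⟩ := hfrom P (hSfac P hP) (hστ.trans hτP)
    obtain ⟨G, hG, hQeq⟩ := hfrom Q (hSfac Q hQ) (hστ.trans hτQ)
    have hFG : F ≠ G := fun h => hPQ (by rw [hPeq, hQeq, h])
    apply Finset.Subset.antisymm hστ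
    have : τ ⊆ (σ ∪ F) ∩ (σ ∪ G) := Finset.subset_inter (hPeq ▸ hτP) (hQeq ▸ hτQ)
    rwa [← Finset.union_inter_distrib_left,
      Finset.disjoint_iff_inter_eq_empty.mp (hdisj F hF G hG hFG),
      Finset.union_empty] at this
  · rintro ⟨⟨S, hSc, hSfac, hσeq⟩, hmax⟩
    have hσsub : ∀ F ∈ S, σ ⊆ F := fun F hF =>
      hσeq ▸ Finset.le_iff_subset.mp (Finset.inf_le hF)
    -- σ is not a facet
    have hnotfacet : ¬ IsFacet K σ := by
      rintro ⟨_, hmaxσ⟩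
      obtain ⟨A, hA, B, hB, hAB⟩ := Finset.one_lt_card.mp hSc
      exact hAB ((hmaxσ A (hSfac A hA).1 (hσsub A hA)).symm.trans
        (hmaxσ B (hSfac B hB).1 (hσsub B hB)))
    set 𝒟 : Finset (Finset V) :=
      Finset.univ.filter (fun F => IsFacet K F ∧ σ ⊆ F) with h𝒟
    have hmem𝒟 : ∀ F, F ∈ 𝒟 ↔ IsFacet K F ∧ σ ⊆ F := by
      intro F; simp [h𝒟]
    refine ⟨𝒟.image (fun F => F \ σ), ?_, ?_, ?_, ?_⟩
    · obtain ⟨A, hA, B, hB, hAB⟩ := Finset.one_lt_card.mp hSc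
      refine Finset.one_lt_card.mpr ⟨A \ σ, Finset.mem_image_of_mem _
        ((hmem𝒟 A).mpr ⟨hSfac A hA, hσsub A hA⟩), B \ σ, Finset.mem_image_of_mem _
        ((hmem𝒟 B).mpr ⟨hSfac B hB, hσsub B hB⟩), ?_⟩
      intro h
      apply hAB
      rw [← Finset.union_sdiff_of_subset (hσsub A hA), h,
        Finset.union_sdiff_of_subset (hσsub B hB)]
    · intro t ht
      obtain ⟨F, hF, rfl⟩ := Finset.mem_image.mp ht
      obtain ⟨hFfac, hσF⟩ := (hmem𝒟 F).mp hF
      rw [Finset.sdiff_nonempty]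
      intro hFσ
      exact hnotfacet ((Finset.Subset.antisymm hσF hFσ) ▸ hFfac)
    · intro a ha b hb hab
      obtain ⟨F, hF, rfl⟩ := Finset.mem_image.mp ha
      obtain ⟨G, hG, rfl⟩ := Finset.mem_image.mp hb
      obtain ⟨hFfac, hσF⟩ := (hmem𝒟 F).mp hF
      obtain ⟨hGfac, hσG⟩ := (hmem𝒟 G).mp hG
      have hFG : F ≠ G := fun h => hab (by rw [h])
      rw [Finset.disjoint_left]
      intro x hxF hxG
      have hx1 := Finset.mem_sdiff.mp hxF
      have hx2 := Finset.mem_sdiff.mp hxG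
      -- F ∩ G is a facet intersection containing σ, so equals σ by maximality
      have : σ = F ∩ G := by
        apply hmax
        · refine ⟨{F, G}, ?_, ?_, ?_⟩
          · rw [Finset.card_insert_of_notMem (by simpa using hFG), Finset.card_singleton]
          · intro H hH
            rcases Finset.mem_insert.mp hH with h | h
            · exact h ▸ hFfac
            · exact (Finset.mem_singleton.mp h) ▸ hGfac
          · rw [inf_pair_eq]
        · exact Finset.subset_inter hσF hσG
      exact hx1.2 (this ▸ Finset.mem_inter.mpr ⟨hx1.1, hx2.1⟩)
    · ext t
      simp only [Set.mem_setOf_eq]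
      constructor
      · rintro ⟨hdt, htK⟩
        obtain ⟨F, hFfac, hsub⟩ := exists_facet_superset htK
        have hσF : σ ⊆ F := (Finset.union_subset_iff.mp hsub).1
        refine ⟨F \ σ, Finset.mem_image_of_mem _ ((hmem𝒟 F).mpr ⟨hFfac, hσF⟩), ?_⟩
        exact Finset.subset_sdiff.mpr ⟨(Finset.union_subset_iff.mp hsub).2, hdt.symm⟩
      · rintro ⟨a, ha, hta⟩
        obtain ⟨F, hF, rfl⟩ := Finset.mem_image.mp ha
        obtain ⟨hFfac, hσF⟩ := (hmem𝒟 F).mp hF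
        refine ⟨Disjoint.symm (Finset.sdiff_disjoint.mono_left hta), ?_⟩
        exact hK F hFfac.1 _ (Finset.union_subset hσF (hta.trans Finset.sdiff_subset))
end
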